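/- Let k ≥ 1, n ≥ 1, and let ω = (ω₁, ω₂, …) be a sequence of integers. Let H₋ be the n×n Hessenberg matrix over ℤ[t₁,…,t_k] with entries (H₋)_{i,j} = t_{i−j+1} for 1 ≤ j ≤ i ≤ n−1, (H₋)_{i,i+1} = −1 for 1 ≤ i ≤ n−1, (H₋)_{n,j} = ω_{n−j+1}·t_{n−j+1} for 1 ≤ j ≤ n, and all other entries 0. Then det H₋ = P_{ω,k,n}. -/

import Mathlib

open Finset MvPolynomial

/-- The set of partitions `α ⊢ n` with parts at most `k`, encoded as tuples
`α = (α₁, …, α_k) ∈ ℕ^k` (0-indexed) with `∑ j, (j+1)·α_j = n`. -/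
def partitions (k n : ℕ) : Finset (Fin k → ℕ) :=
  (Fintype.piFinset fun _ : Fin k => Finset.range (n + 1)).filter
    fun α => ∑ j : Fin k, (j.1 + 1) * α j = n

/-- The variable `t_{m+1}` of `ℚ[t₁,…,t_k]` (0-indexed), with the convention
`t_j = 0` for `j > k`. -/
noncomputable def tQ (k m : ℕ) : MvPolynomial (Fin k) ℚ :=
  if h : m < k then X ⟨m, h⟩ else 0

/-- The weighted isobaric polynomial with weight vector `ω` (0-indexed, so
`ω 0 = ω₁`): `P_{ω,k,n} = ∑_{α ⊢ n} (|α|!/(α₁!⋯α_k!))·((∑ᵢ αᵢωᵢ)/|α|)·t^α`.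
Its coefficients are integers; it is written here in `ℚ[t₁,…,t_k]`. -/
noncomputable def P (k : ℕ) (ω : ℕ → ℤ) (n : ℕ) : MvPolynomial (Fin k) ℚ :=
  ∑ α ∈ partitions k n,
    C ((Nat.multinomial Finset.univ α : ℚ) *
        ((∑ i : Fin k, (α i : ℚ) * (ω i.1 : ℚ)) / ((∑ i, α i : ℕ) : ℚ))) *
      ∏ j, X j ^ α j

/-- The `n×n` Hessenberg matrix `H₋` (0-indexed): rows `1 ≤ i ≤ n-1` (1-based)
have `t_{i-j+1}` for `j ≤ i` and `-1` on the superdiagonal; the last row has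
entries `ω_{n-j+1}·t_{n-j+1}`; all other entries are `0`. -/
noncomputable def Hminus (k n : ℕ) (ω : ℕ → ℤ) :
    Matrix (Fin n) (Fin n) (MvPolynomial (Fin k) ℚ) :=
  fun i j =>
    if i.1 = n - 1 then
      if j.1 ≤ i.1 then C ((ω (i.1 - j.1) : ℚ)) * tQ k (i.1 - j.1) else 0
    else if j.1 ≤ i.1 then tQ k (i.1 - j.1)
    else if j.1 = i.1 + 1 then -1
    else 0

lemma sum_update_gen {M : Type*} [AddCommMonoid M] {k : ℕ} (g : Fin k → ℕ → M)
    (β : Fin k → ℕ) (j : Fin k) (b : ℕ) :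
    ∑ x, g x (Function.update β j b x) = g j b + ∑ x ∈ univ.erase j, g x (β x) := by
  rw [← Finset.add_sum_erase _ _ (mem_univ j), Function.update_self]
  congr 1
  exact Finset.sum_congr rfl fun x hx => by
    rw [Function.update_of_ne (Finset.ne_of_mem_erase hx)]

lemma prod_update_gen {M : Type*} [CommMonoid M] {k : ℕ} (g : Fin k → ℕ → M)
    (β : Fin k → ℕ) (j : Fin k) (b : ℕ) :
    ∏ x, g x (Function.update β j b x) = g j b * ∏ x ∈ univ.erase j, g x (β x) := by
  rw [← Finset.mul_prod_erase _ _ (mem_univ j), Function.update_self]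
  congr 1
  exact Finset.prod_congr rfl fun x hx => by
    rw [Function.update_of_ne (Finset.ne_of_mem_erase hx)]

lemma mem_partitions {k n : ℕ} {α : Fin k → ℕ} :
    α ∈ partitions k n ↔ ∑ j : Fin k, (j.1 + 1) * α j = n := by
  simp only [partitions, Finset.mem_filter, Fintype.mem_piFinset, Finset.mem_range]
  constructor
  · exact fun h => h.2
  · intro h
    refine ⟨fun j => ?_, h⟩
    have h1 : (j.1 + 1) * α j ≤ n := h ▸ Finset.single_le_sum
      (f := fun j : Fin k => (j.1 + 1) * α j) (fun i _ => Nat.zero_le _) (mem_univ j)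
    have := Nat.le_mul_of_pos_left (α j) (show 0 < j.1 + 1 by omega)
    omega

lemma key_identity {k : ℕ} (α : Fin k → ℕ) (m : Fin k) (hm : 1 ≤ α m) :
    (α m : ℚ) * (Nat.multinomial Finset.univ α : ℚ) =
      ((∑ i, α i : ℕ) : ℚ) *
        (Nat.multinomial Finset.univ (Function.update α m (α m - 1)) : ℚ) := by
  have spec1 := Nat.multinomial_spec Finset.univ α
  have spec2 := Nat.multinomial_spec Finset.univ (Function.update α m (α m - 1))
  have hprod : ∏ i, (α i).factorial
      = α m * ∏ i, (Function.update α m (α m - 1) i).factorial := by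
    rw [prod_update_gen (fun x b => b.factorial), ← Finset.mul_prod_erase _ _ (mem_univ m),
      ← mul_assoc]
    congr 1
    rw [← Nat.succ_pred_eq_of_pos hm, Nat.factorial_succ]
    simp [Nat.succ_pred_eq_of_pos hm]
  have hsum : ∑ i, Function.update α m (α m - 1) i = (∑ i, α i) - 1 := by
    rw [sum_update_gen (fun x b => b), ← Finset.add_sum_erase _ _ (mem_univ m)]
    omega
  have hN : 1 ≤ ∑ i, α i := le_trans hm (Finset.single_le_sum
      (f := fun i => α i) (fun i _ => Nat.zero_le _) (mem_univ m))
  have e1 : ((∏ i, (α i).factorial : ℕ) : ℚ) * (Nat.multinomial Finset.univ α : ℚ)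
      = ((∑ i, α i).factorial : ℚ) := by exact_mod_cast congrArg Nat.cast spec1
  have e2 : ((∏ i, (Function.update α m (α m - 1) i).factorial : ℕ) : ℚ) *
      (Nat.multinomial Finset.univ (Function.update α m (α m - 1)) : ℚ)
      = (((∑ i, α i) - 1).factorial : ℚ) := by
    rw [← hsum]; exact_mod_cast congrArg Nat.cast spec2
  obtain ⟨M, hM⟩ : ∃ M, ∑ i, α i = M + 1 := ⟨_, (Nat.succ_pred_eq_of_pos hN).symm⟩
  have hfac : ((∑ i, α i).factorial : ℚ)
      = ((∑ i, α i : ℕ) : ℚ) * (((∑ i, α i) - 1).factorial : ℚ) := by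
    rw [hM, Nat.add_sub_cancel, Nat.factorial_succ]; push_cast; ring
  have hp2ne : ((∏ i, (Function.update α m (α m - 1) i).factorial : ℕ) : ℚ) ≠ 0 := by
    positivity
  have hprodQ : ((∏ i, (α i).factorial : ℕ) : ℚ)
      = (α m : ℚ) * ((∏ i, (Function.update α m (α m - 1) i).factorial : ℕ) : ℚ) := by
    exact_mod_cast congrArg Nat.cast hprod
  apply mul_right_cancel₀ hp2ne
  calc (α m : ℚ) * (Nat.multinomial Finset.univ α : ℚ) *
        ((∏ i, (Function.update α m (α m - 1) i).factorial : ℕ) : ℚ)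
      = (Nat.multinomial Finset.univ α : ℚ) * ((α m : ℚ) *
        ((∏ i, (Function.update α m (α m - 1) i).factorial : ℕ) : ℚ)) := by ring
    _ = ((∏ i, (α i).factorial : ℕ) : ℚ) * (Nat.multinomial Finset.univ α : ℚ) := by
        rw [← hprodQ]; ring
    _ = ((∑ i, α i).factorial : ℚ) := e1
    _ = ((∑ i, α i : ℕ) : ℚ) * (((∑ i, α i) - 1).factorial : ℚ) := hfac
    _ = ((∑ i, α i : ℕ) : ℚ) * (((∏ i, (Function.update α m (α m - 1) i).factorial : ℕ) : ℚ) *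
        (Nat.multinomial Finset.univ (Function.update α m (α m - 1)) : ℚ)) := by rw [e2]
    _ = ((∑ i, α i : ℕ) : ℚ) *
        (Nat.multinomial Finset.univ (Function.update α m (α m - 1)) : ℚ) *
        ((∏ i, (Function.update α m (α m - 1) i).factorial : ℕ) : ℚ) := by ring

noncomputable def cc (k : ℕ) (ω : ℕ → ℤ) (α : Fin k → ℕ) : ℚ :=
  (Nat.multinomial Finset.univ α : ℚ) *
    ((∑ i : Fin k, (α i : ℚ) * (ω i.1 : ℚ)) / ((∑ i, α i : ℕ) : ℚ))

lemma P_eq (k : ℕ) (ω : ℕ → ℤ) (n : ℕ) :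
    P k ω n = ∑ α ∈ partitions k n, C (cc k ω α) * ∏ j, X j ^ α j := rfl

lemma sum_update_sub {k : ℕ} (α : Fin k → ℕ) (m : Fin k) (hm : 1 ≤ α m) :
    ∑ i, Function.update α m (α m - 1) i = (∑ i, α i) - 1 := by
  rw [sum_update_gen (fun _ b => b), ← Finset.add_sum_erase _ _ (mem_univ m)]
  omega

lemma cc_rec (k : ℕ) (ω : ℕ → ℤ) (α : Fin k → ℕ) (h2 : 2 ≤ ∑ i, α i) :
    cc k ω α
      = ∑ m : Fin k, (if 1 ≤ α m then cc k ω (Function.update α m (α m - 1)) else 0) := by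
  have hN2 : (2 : ℚ) ≤ ((∑ i, α i : ℕ) : ℚ) := by exact_mod_cast h2
  have hNne : ((∑ i, α i : ℕ) : ℚ) ≠ 0 := by linarith
  have hN1ne : ((∑ i, α i : ℕ) : ℚ) - 1 ≠ 0 := by linarith
  set S : ℚ := ∑ i : Fin k, (α i : ℚ) * (ω i.1 : ℚ) with hSdef
  have per : ∀ m : Fin k,
      (if 1 ≤ α m then cc k ω (Function.update α m (α m - 1)) else 0)
      = (α m : ℚ) * (Nat.multinomial Finset.univ α : ℚ) * (S - (ω m.1 : ℚ)) /
        (((∑ i, α i : ℕ) : ℚ) * (((∑ i, α i : ℕ) : ℚ) - 1)) := by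
    intro m
    by_cases hm : 1 ≤ α m
    · rw [if_pos hm]
      have hsum := sum_update_sub α m hm
      have hsumcast : ((∑ i, Function.update α m (α m - 1) i : ℕ) : ℚ)
          = ((∑ i, α i : ℕ) : ℚ) - 1 := by
        rw [hsum, Nat.cast_sub (by omega)]; norm_num
      have hS' : (∑ i : Fin k, ((Function.update α m (α m - 1) i : ℕ) : ℚ) * (ω i.1 : ℚ))
          = S - (ω m.1 : ℚ) := by
        rw [sum_update_gen (fun x b => (b : ℚ) * (ω x.1 : ℚ)), hSdef,
          ← Finset.add_sum_erase _ _ (mem_univ m), Nat.cast_sub hm]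
        push_cast
        ring
      have hkey := key_identity α m hm
      have hMβ : (Nat.multinomial Finset.univ (Function.update α m (α m - 1)) : ℚ)
          = (α m : ℚ) * (Nat.multinomial Finset.univ α : ℚ) / ((∑ i, α i : ℕ) : ℚ) := by
        rw [eq_div_iff hNne]; linarith [hkey]
      rw [cc, hS', hsumcast, hMβ, div_mul_div_comm]
    · rw [if_neg hm]
      have h0 : α m = 0 := by omega
      rw [h0]
      simp
  rw [Finset.sum_congr rfl (fun m _ => per m)]
  have hNcast : ((∑ i, α i : ℕ) : ℚ) = ∑ m : Fin k, (α m : ℚ) := by push_cast; rfl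
  have hnum : ∑ m : Fin k, (α m : ℚ) * (Nat.multinomial Finset.univ α : ℚ) * (S - (ω m.1 : ℚ))
      = (Nat.multinomial Finset.univ α : ℚ) * (((∑ i, α i : ℕ) : ℚ) * S - S) := by
    calc ∑ m : Fin k, (α m : ℚ) * (Nat.multinomial Finset.univ α : ℚ) * (S - (ω m.1 : ℚ))
        = ∑ m : Fin k, ((Nat.multinomial Finset.univ α : ℚ) * S * (α m : ℚ)
            - (Nat.multinomial Finset.univ α : ℚ) * ((α m : ℚ) * (ω m.1 : ℚ))) :=
          Finset.sum_congr rfl fun m _ => by ring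
      _ = (Nat.multinomial Finset.univ α : ℚ) * S * (∑ m : Fin k, (α m : ℚ))
            - (Nat.multinomial Finset.univ α : ℚ) * S := by
          rw [Finset.sum_sub_distrib, ← Finset.mul_sum, ← Finset.mul_sum, hSdef]
      _ = (Nat.multinomial Finset.univ α : ℚ) * (((∑ i, α i : ℕ) : ℚ) * S - S) := by
          rw [← hNcast]; ring
  have hNne2 : (∑ x : Fin k, (α x : ℚ)) ≠ 0 := by rw [← hNcast]; exact hNne
  have hN1ne2 : (∑ x : Fin k, (α x : ℚ)) - 1 ≠ 0 := by rw [← hNcast]; exact hN1ne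
  rw [← Finset.sum_div, hnum, cc]
  field_simp
  ring

lemma partition_sum_one {k m : ℕ} {α : Fin k → ℕ} (hα : α ∈ partitions k (m + 1))
    (h1 : ∑ i, α i < 2) : ∃ h : m < k, α = Pi.single (⟨m, h⟩ : Fin k) 1 := by
  rw [mem_partitions] at hα
  obtain ⟨j, hj⟩ : ∃ j, α j ≠ 0 := by
    by_contra h
    push_neg at h
    simp [h] at hα
  have hdec : α j + ∑ i ∈ univ.erase j, α i = ∑ i, α i :=
    Finset.add_sum_erase _ _ (mem_univ j)
  have hrest : ∑ i ∈ univ.erase j, α i = 0 := by omega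
  have hαj : α j = 1 := by omega
  have hzero : ∀ i, i ≠ j → α i = 0 := fun i hi =>
    (Finset.sum_eq_zero_iff.mp hrest) i (by simp [Finset.mem_erase, hi])
  have hdec2 : (j.1 + 1) * α j + ∑ i ∈ univ.erase j, (i.1 + 1) * α i
      = ∑ i : Fin k, (i.1 + 1) * α i :=
    Finset.add_sum_erase _ (fun i : Fin k => (i.1 + 1) * α i) (mem_univ j)
  have hz2 : ∑ i ∈ univ.erase j, (i.1 + 1) * α i = 0 :=
    Finset.sum_eq_zero fun i hi => by rw [hzero i (Finset.ne_of_mem_erase hi), mul_zero]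
  have hjm : j.1 = m := by rw [hz2] at hdec2; rw [hαj] at hdec2; omega
  have hmk : m < k := hjm ▸ j.2
  refine ⟨hmk, ?_⟩
  have hj' : (⟨m, hmk⟩ : Fin k) = j := by ext; exact hjm.symm
  funext i
  rcases eq_or_ne i j with rfl | hij
  · rw [hj', Pi.single_eq_same, hαj]
  · rw [hj', Pi.single_eq_of_ne hij, hzero i hij]

lemma cc_single {k m : ℕ} (ω : ℕ → ℤ) (h : m < k) :
    cc k ω (Pi.single (⟨m, h⟩ : Fin k) 1) = (ω m : ℚ) := by
  set j : Fin k := ⟨m, h⟩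
  set α1 : Fin k → ℕ := Pi.single j 1 with hα1
  have hsum : ∑ i, α1 i = 1 := by
    rw [Finset.sum_eq_single j]
    · simp [α1]
    · intro b _ hb; simp [α1, Pi.single_eq_of_ne hb]
    · simp
  have hmul : Nat.multinomial Finset.univ α1 = 1 := by
    have spec := Nat.multinomial_spec Finset.univ α1
    have hp : ∏ i, (α1 i).factorial = 1 := by
      apply Finset.prod_eq_one
      intro i _
      rcases eq_or_ne i j with rfl | hij
      · simp [α1]
      · simp [α1, Pi.single_eq_of_ne hij]
    rw [hp, one_mul, hsum] at spec
    simpa using spec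
  have hS : ∑ i : Fin k, ((α1 i : ℕ) : ℚ) * (ω i.1 : ℚ) = (ω m : ℚ) := by
    rw [Finset.sum_eq_single j]
    · simp [α1, j]
    · intro b _ hb; simp [α1, Pi.single_eq_of_ne hb]
    · simp
  rw [cc, hmul, hS, hsum]
  norm_num

lemma monomial_single {k m : ℕ} (h : m < k) :
    (∏ i : Fin k, (X i : MvPolynomial (Fin k) ℚ) ^ (Pi.single (⟨m, h⟩ : Fin k) 1 i))
      = tQ k m := by
  rw [tQ, dif_pos h, Finset.prod_eq_single (⟨m, h⟩ : Fin k)]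
  · simp
  · intro b _ hb
    rw [show Pi.single (M := fun _ : Fin k => ℕ) (⟨m, h⟩ : Fin k) 1 b = 0 from
      Pi.single_eq_of_ne hb 1, pow_zero]
  · simp

lemma P_rec (k : ℕ) (ω : ℕ → ℤ) (m : ℕ) :
    P k ω (m + 1) = (∑ j ∈ Finset.range m, tQ k j * P k ω (m - j)) + C ((ω m : ℚ)) * tQ k m := by
  rw [P_eq,
    ← Finset.sum_filter_add_sum_filter_not (partitions k (m + 1)) (fun α => 2 ≤ ∑ i, α i)]
  have piece1 :
      ∑ α ∈ (partitions k (m + 1)).filter (fun α => ¬ 2 ≤ ∑ i, α i),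
        C (cc k ω α) * ∏ j, X j ^ α j = C ((ω m : ℚ)) * tQ k m := by
    by_cases hm : m < k
    · have hset : (partitions k (m + 1)).filter (fun α => ¬ 2 ≤ ∑ i, α i)
          = {Pi.single (⟨m, hm⟩ : Fin k) 1} := by
        ext β
        simp only [Finset.mem_filter, Finset.mem_singleton]
        constructor
        · rintro ⟨hβ, h2⟩
          obtain ⟨h, rfl⟩ := partition_sum_one hβ (by omega)
          rfl
        · rintro rfl
          refine ⟨mem_partitions.mpr ?_, ?_⟩
          · rw [Finset.sum_eq_single (⟨m, hm⟩ : Fin k)]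
            · simp
            · intro b _ hb
              rw [show Pi.single (M := fun _ : Fin k => ℕ) (⟨m, hm⟩ : Fin k) 1 b = 0 from
                Pi.single_eq_of_ne hb 1, mul_zero]
            · simp
          · rw [Finset.sum_eq_single (⟨m, hm⟩ : Fin k)]
            · simp
            · intro b _ hb
              exact Pi.single_eq_of_ne hb 1
            · simp
      rw [hset, Finset.sum_singleton, cc_single ω hm, monomial_single hm]
    · have hset : (partitions k (m + 1)).filter (fun α => ¬ 2 ≤ ∑ i, α i) = ∅ := by
        apply Finset.eq_empty_of_forall_notMem
        intro β hβ
        rw [Finset.mem_filter] at hβ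
        obtain ⟨h, _⟩ := partition_sum_one hβ.1 (by omega)
        exact hm h
      rw [hset, Finset.sum_empty, tQ, dif_neg hm, mul_zero]
  rw [piece1]
  congr 1
  -- piece 2
  have step1 : ∑ j ∈ Finset.range m, tQ k j * P k ω (m - j)
      = ∑ j ∈ (Finset.range m).filter (· < k), tQ k j * P k ω (m - j) := by
    refine (Finset.sum_filter_of_ne fun x hx hne => ?_).symm
    by_contra hk
    exact hne (by rw [tQ, dif_neg hk, zero_mul])
  have step2 : ∑ j ∈ (Finset.range m).filter (· < k), tQ k j * P k ω (m - j)
      = ∑ j ∈ (univ : Finset (Fin k)).filter (fun j => j.1 < m),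
          X j * P k ω (m - j.1) := by
    refine Finset.sum_bij' (fun a ha => (⟨a, (Finset.mem_filter.mp ha).2⟩ : Fin k))
      (fun j _ => j.1) ?_ ?_ ?_ ?_ ?_
    · intro a ha
      simp only [Finset.mem_filter, Finset.mem_univ, true_and]
      exact Finset.mem_range.mp (Finset.mem_filter.mp ha).1
    · intro j hj
      simp only [Finset.mem_filter, Finset.mem_range]
      exact ⟨(Finset.mem_filter.mp hj).2, j.2⟩
    · intro a ha; rfl
    · intro j hj; rfl
    · intro a ha
      rw [tQ, dif_pos (Finset.mem_filter.mp ha).2]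
  have step3 : ∑ j ∈ (univ : Finset (Fin k)).filter (fun j => j.1 < m),
        X j * P k ω (m - j.1)
      = ∑ p ∈ ((univ : Finset (Fin k)).filter (fun j => j.1 < m)).sigma
            (fun j => partitions k (m - j.1)),
          X p.1 * (C (cc k ω p.2) * ∏ x, X x ^ p.2 x) := by
    rw [Finset.sum_sigma]
    exact Finset.sum_congr rfl fun j _ => by rw [P_eq, Finset.mul_sum]
  rw [step1, step2, step3]
  -- the main bijection
  have main_bij :
      ∑ p ∈ ((univ : Finset (Fin k)).filter (fun j => j.1 < m)).sigma
          (fun j => partitions k (m - j.1)),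
        X p.1 * (C (cc k ω p.2) * ∏ x, X x ^ p.2 x)
      = ∑ q ∈ (((partitions k (m + 1)).filter (fun α => 2 ≤ ∑ i, α i)) ×ˢ
            (univ : Finset (Fin k))).filter (fun q => 1 ≤ q.1 q.2),
          C (cc k ω (Function.update q.1 q.2 (q.1 q.2 - 1))) * ∏ x, X x ^ q.1 x := by
    refine Finset.sum_bij'
      (fun p _ => ((Function.update p.2 p.1 (p.2 p.1 + 1), p.1) : (Fin k → ℕ) × Fin k))
      (fun q _ => (⟨q.2, Function.update q.1 q.2 (q.1 q.2 - 1)⟩ :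
        (_ : Fin k) × (Fin k → ℕ)))
      ?_ ?_ ?_ ?_ ?_
    · -- hi : maps into codomain
      rintro ⟨j0, β⟩ hp
      dsimp only
      rw [Finset.mem_sigma, Finset.mem_filter] at hp
      obtain ⟨⟨-, hjm⟩, hβ⟩ := hp
      dsimp only at hjm hβ
      rw [mem_partitions] at hβ
      have hdecS : ∑ x : Fin k, (x.1 + 1) * Function.update β j0 (β j0 + 1) x
          = (j0.1 + 1) * (β j0 + 1) + ∑ x ∈ univ.erase j0, (x.1 + 1) * β x :=
        sum_update_gen (fun x b => (x.1 + 1) * b) β j0 (β j0 + 1)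
      have hdecB : (j0.1 + 1) * β j0 + ∑ x ∈ univ.erase j0, (x.1 + 1) * β x
          = ∑ x : Fin k, (x.1 + 1) * β x :=
        Finset.add_sum_erase _ (fun x : Fin k => (x.1 + 1) * β x) (mem_univ j0)
      have hmul : (j0.1 + 1) * (β j0 + 1) = (j0.1 + 1) * β j0 + (j0.1 + 1) := by ring
      have hsum2 : ∑ x : Fin k, Function.update β j0 (β j0 + 1) x
          = (β j0 + 1) + ∑ x ∈ univ.erase j0, β x :=
        sum_update_gen (fun _ b => b) β j0 (β j0 + 1)
      have hpos : 1 ≤ β j0 + ∑ x ∈ univ.erase j0, β x := by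
        by_contra hc
        push_neg at hc
        have hz1 : β j0 = 0 := by omega
        have hz2 : ∑ x ∈ univ.erase j0, β x = 0 := by omega
        have hz3 : ∑ x ∈ univ.erase j0, (x.1 + 1) * β x = 0 :=
          Finset.sum_eq_zero fun x hx => by
            rw [Finset.sum_eq_zero_iff.mp hz2 x hx, mul_zero]
        have hz4 : (j0.1 + 1) * β j0 = 0 := by rw [hz1, mul_zero]
        omega
      rw [Finset.mem_filter, Finset.mem_product, Finset.mem_filter]
      dsimp only
      refine ⟨⟨⟨mem_partitions.mpr (by omega), ?_⟩, mem_univ _⟩, ?_⟩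
      · rw [hsum2]; omega
      · simp only [Function.update_self]; omega
    · -- hj : inverse maps into domain
      rintro ⟨α, j0⟩ hq
      dsimp only
      rw [Finset.mem_filter, Finset.mem_product, Finset.mem_filter] at hq
      obtain ⟨⟨⟨hα, h2⟩, -⟩, h1⟩ := hq
      dsimp only at hα h2 h1
      rw [mem_partitions] at hα
      have hdecB : (j0.1 + 1) * α j0 + ∑ x ∈ univ.erase j0, (x.1 + 1) * α x
          = ∑ x : Fin k, (x.1 + 1) * α x :=
        Finset.add_sum_erase _ (fun x : Fin k => (x.1 + 1) * α x) (mem_univ j0)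
      have hdecS : ∑ x : Fin k, (x.1 + 1) * Function.update α j0 (α j0 - 1) x
          = (j0.1 + 1) * (α j0 - 1) + ∑ x ∈ univ.erase j0, (x.1 + 1) * α x :=
        sum_update_gen (fun x b => (x.1 + 1) * b) α j0 (α j0 - 1)
      have hmul : (j0.1 + 1) * α j0 = (j0.1 + 1) * (α j0 - 1) + (j0.1 + 1) := by
        have h : α j0 - 1 + 1 = α j0 := by omega
        calc (j0.1 + 1) * α j0 = (j0.1 + 1) * (α j0 - 1 + 1) := by rw [h]
          _ = (j0.1 + 1) * (α j0 - 1) + (j0.1 + 1) := by ring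
      have hSdec : α j0 + ∑ x ∈ univ.erase j0, α x = ∑ x : Fin k, α x :=
        Finset.add_sum_erase _ α (mem_univ j0)
      have hjlt : j0.1 < m := by
        by_contra hge
        push_neg at hge
        have hone : (j0.1 + 1) ≤ (j0.1 + 1) * α j0 := Nat.le_mul_of_pos_right _ (by omega)
        have hrest : ∑ x ∈ univ.erase j0, (x.1 + 1) * α x = 0 := by omega
        have hrest2 : ∑ x ∈ univ.erase j0, α x = 0 :=
          Finset.sum_eq_zero fun x hx => by
            have hz := Finset.sum_eq_zero_iff.mp hrest x hx
            rcases Nat.mul_eq_zero.mp hz with h | h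
            · omega
            · exact h
        have haj : α j0 = 1 := by
          rcases Nat.lt_or_ge (α j0) 2 with h | h
          · omega
          · have := Nat.mul_le_mul_left (j0.1 + 1) h
            omega
        omega
      rw [Finset.mem_sigma, Finset.mem_filter]
      dsimp only
      exact ⟨⟨mem_univ _, hjlt⟩, mem_partitions.mpr (by omega)⟩
    · -- left inverse
      rintro ⟨j0, β⟩ hp
      dsimp only
      have harg : Function.update (Function.update β j0 (β j0 + 1)) j0
          (Function.update β j0 (β j0 + 1) j0 - 1) = β := by
        rw [Function.update_idem, Function.update_self, Nat.add_sub_cancel,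
          Function.update_eq_self]
      rw [harg]
    · -- right inverse
      rintro ⟨α, j0⟩ hq
      dsimp only
      rw [Finset.mem_filter, Finset.mem_product, Finset.mem_filter] at hq
      have h1 : 1 ≤ α j0 := hq.2
      have harg : Function.update (Function.update α j0 (α j0 - 1)) j0
          (Function.update α j0 (α j0 - 1) j0 + 1) = α := by
        rw [Function.update_idem, Function.update_self, Nat.sub_add_cancel h1,
          Function.update_eq_self]
      rw [harg]
    · -- values agree
      rintro ⟨j0, β⟩ hp
      dsimp only
      have hccarg : Function.update (Function.update β j0 (β j0 + 1)) j0
          (Function.update β j0 (β j0 + 1) j0 - 1) = β := by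
        rw [Function.update_idem, Function.update_self, Nat.add_sub_cancel,
          Function.update_eq_self]
      rw [hccarg]
      have hprod : ∏ x : Fin k, (X x : MvPolynomial (Fin k) ℚ) ^
            Function.update β j0 (β j0 + 1) x
          = X j0 * ∏ x, X x ^ β x := by
        rw [prod_update_gen (fun x b => (X x : MvPolynomial (Fin k) ℚ) ^ b),
          ← Finset.mul_prod_erase _ (fun x : Fin k => (X x : MvPolynomial (Fin k) ℚ) ^ β x)
            (mem_univ j0), pow_succ]
        ring
      rw [hprod]
      ring
  rw [main_bij]
  -- final: sum over filtered product equals LHS sum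
  have expand : ∀ α ∈ (partitions k (m + 1)).filter (fun α => 2 ≤ ∑ i, α i),
      C (cc k ω α) * ∏ x, X x ^ α x
        = ∑ j0 : Fin k, (if 1 ≤ α j0 then
            C (cc k ω (Function.update α j0 (α j0 - 1))) * ∏ x, X x ^ α x else 0) := by
    intro α hα
    rw [Finset.mem_filter] at hα
    rw [cc_rec k ω α hα.2, map_sum, Finset.sum_mul]
    exact Finset.sum_congr rfl fun j0 _ => by
      rw [apply_ite C, map_zero, ite_mul, zero_mul]
  have hps : ∑ q ∈ ((partitions k (m + 1)).filter (fun α => 2 ≤ ∑ i, α i)) ×ˢ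
        (univ : Finset (Fin k)),
        (if 1 ≤ q.1 q.2 then
          C (cc k ω (Function.update q.1 q.2 (q.1 q.2 - 1))) * ∏ x, X x ^ q.1 x else 0)
      = ∑ α ∈ (partitions k (m + 1)).filter (fun α => 2 ≤ ∑ i, α i), ∑ j0 : Fin k,
          (if 1 ≤ α j0 then
            C (cc k ω (Function.update α j0 (α j0 - 1))) * ∏ x, X x ^ α x else 0) := by
    rw [Finset.sum_product]
  exact ((Finset.sum_congr rfl expand).trans hps.symm).trans (Finset.sum_filter _ _).symm

noncomputable def Gmat (k n : ℕ) (ω : ℕ → ℤ) (s : ℕ) :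
    Matrix (Fin n) (Fin n) (MvPolynomial (Fin k) ℚ) :=
  fun i j =>
    if j.1 = 0 then
      (if i.1 = n - 1 then C ((ω (i.1 + s) : ℚ)) * tQ k (i.1 + s) else tQ k (i.1 + s))
    else Hminus k n ω i j

lemma Gmat_zero (k n : ℕ) (ω : ℕ → ℤ) : Gmat k n ω 0 = Hminus k n ω := by
  funext i j
  by_cases hj : j.1 = 0
  · by_cases hi : i.1 = n - 1 <;> simp [Gmat, Hminus, hj, hi]
  · simp [Gmat, hj]

lemma Hminus_succ_succ {k n : ℕ} (ω : ℕ → ℤ) (r c : Fin n) :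
    Hminus k (n + 1) ω r.succ c.succ = Hminus k n ω r c := by
  have hr : r.1 < n := r.2
  simp only [Hminus, Fin.val_succ, Nat.add_sub_cancel]
  have h1 : (r.1 + 1 = n) ↔ (r.1 = n - 1) := by omega
  have h2 : (c.1 + 1 ≤ r.1 + 1) ↔ (c.1 ≤ r.1) := by omega
  have h3 : r.1 + 1 - (c.1 + 1) = r.1 - c.1 := by omega
  have h4 : (c.1 + 1 = r.1 + 1 + 1) ↔ (c.1 = r.1 + 1) := by omega
  rw [h3]
  simp only [h1, h2, h4]

lemma Gmat_det_rec (k : ℕ) (ω : ℕ → ℤ) (n : ℕ) (s : ℕ) :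
    (Gmat k (n + 2) ω s).det
      = tQ k s * (Gmat k (n + 1) ω 0).det + (Gmat k (n + 1) ω (s + 1)).det := by
  have hA : (Gmat k (n + 2) ω s).submatrix Fin.succ ((0 : Fin (n + 2)).succAbove)
      = Gmat k (n + 1) ω 0 := by
    rw [Gmat_zero]
    funext r c
    rw [Matrix.submatrix_apply, Fin.succAbove_zero]
    have e1 : Gmat k (n + 2) ω s r.succ c.succ = Hminus k (n + 2) ω r.succ c.succ := by
      rw [Gmat, if_neg]; simp [Fin.val_succ]
    rw [e1, Hminus_succ_succ]
  have hB : (Gmat k (n + 2) ω s).submatrix Fin.succ ((Fin.succ 0 : Fin (n + 2)).succAbove)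
      = Gmat k (n + 1) ω (s + 1) := by
    funext r c
    rw [Matrix.submatrix_apply]
    rcases Nat.eq_zero_or_pos c.1 with hc | hc
    · have hcol : (Fin.succ 0 : Fin (n + 2)).succAbove c = ⟨0, by omega⟩ := by
        rw [Fin.succAbove_of_castSucc_lt]
        · ext; simp [hc]
        · rw [Fin.lt_def]; simp [hc, Fin.val_succ]
      have h1 : (r.1 + 1 = n + 2 - 1) ↔ (r.1 = n + 1 - 1) := by omega
      have h2 : r.1 + 1 + s = r.1 + (s + 1) := by omega
      rw [hcol, Gmat, Gmat]
      simp only [Fin.val_succ, hc, h2, h1, eq_self_iff_true, if_true]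
    · have hcol : (Fin.succ 0 : Fin (n + 2)).succAbove c = c.succ := by
        rw [Fin.succAbove_of_le_castSucc]
        rw [Fin.le_def]
        simp [Fin.val_succ]; omega
      rw [hcol]
      have e1 : Gmat k (n + 2) ω s r.succ c.succ = Hminus k (n + 2) ω r.succ c.succ := by
        rw [Gmat, if_neg]; simp [Fin.val_succ]
      have e2 : Gmat k (n + 1) ω (s + 1) r c = Hminus k (n + 1) ω r c := by
        rw [Gmat, if_neg]; omega
      rw [e1, e2, Hminus_succ_succ]
  have h00 : Gmat k (n + 2) ω s 0 0 = tQ k s := by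
    simp [Gmat]
  have h01 : Gmat k (n + 2) ω s 0 (Fin.succ 0) = -1 := by
    rw [Gmat, if_neg (by simp), Hminus]
    rw [if_neg (by simp), if_neg (by simp), if_pos (by simp)]
  rw [Matrix.det_succ_row_zero, Fin.sum_univ_succ, Fin.sum_univ_succ]
  have hrest : ∑ j : Fin n,
      (-1 : MvPolynomial (Fin k) ℚ) ^ (((j.succ.succ : Fin (n + 2))) : ℕ) *
        Gmat k (n + 2) ω s 0 j.succ.succ *
        ((Gmat k (n + 2) ω s).submatrix Fin.succ (j.succ.succ : Fin (n + 2)).succAbove).det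
      = 0 := by
    apply Finset.sum_eq_zero
    intro j _
    have hz : Gmat k (n + 2) ω s 0 j.succ.succ = 0 := by
      rw [Gmat, if_neg (by simp [Fin.val_succ]), Hminus,
        if_neg (by simp [Fin.val_succ]), if_neg (by simp [Fin.val_succ]),
        if_neg (by simp [Fin.val_succ])]
    rw [hz]
    ring
  rw [hrest, hA, hB, h00, h01]
  simp

lemma Gdet (k : ℕ) (ω : ℕ → ℤ) (n : ℕ) :
    ∀ s, (∀ m', 1 ≤ m' → m' ≤ n → (Hminus k m' ω).det = P k ω m') →
      (Gmat k (n + 1) ω s).det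
        = (∑ j ∈ Finset.range n, tQ k (s + j) * P k ω (n - j))
            + C ((ω (s + n) : ℚ)) * tQ k (s + n) := by
  induction n with
  | zero =>
    intro s _
    rw [Matrix.det_fin_one]
    have : Gmat k 1 ω s 0 0 = C ((ω (0 + s) : ℚ)) * tQ k (0 + s) := by
      simp [Gmat]
    rw [this]
    simp [Nat.zero_add, Nat.add_zero]
  | succ n ih =>
    intro s hP
    rw [Gmat_det_rec, Gmat_zero, hP (n + 1) (by omega) (le_refl _),
      ih (s + 1) (fun m' h1 h2 => hP m' h1 (by omega)),
      Finset.sum_range_succ']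
    have e0 : tQ k (s + 0) * P k ω (n + 1 - 0) = tQ k s * P k ω (n + 1) := by
      rw [Nat.add_zero, Nat.sub_zero]
    have e1 : ∀ j, tQ k (s + 1 + j) * P k ω (n - j)
        = tQ k (s + (j + 1)) * P k ω (n + 1 - (j + 1)) := by
      intro j
      have h1 : s + 1 + j = s + (j + 1) := by omega
      have h2 : n - j = n + 1 - (j + 1) := by omega
      rw [h1, h2]
    have e2 : s + 1 + n = s + (n + 1) := by omega
    rw [e0, Finset.sum_congr rfl (fun j _ => e1 j), e2]
    ring


theorem det_Hminus_eq_P (k n : ℕ) (hk : 1 ≤ k) (hn : 1 ≤ n) (ω : ℕ → ℤ) :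
    (Hminus k n ω).det = P k ω n := by
  suffices h : ∀ n, 1 ≤ n → (Hminus k n ω).det = P k ω n from h n hn
  intro n
  induction n using Nat.strong_induction_on with
  | _ n ih =>
    intro hn
    obtain ⟨m, rfl⟩ : ∃ m, n = m + 1 := ⟨n - 1, by omega⟩
    rw [← Gmat_zero k (m + 1) ω,
      Gdet k ω m 0 (fun m' h1 h2 => ih m' (by omega) h1)]
    simp only [Nat.zero_add]
    exact (P_rec k ω m).symm
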